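/- Let $k$ be a field of characteristic zero and let $\phi \in k[[x_1,\dots,x_n]]$ be a power series that is algebraic over the rational function field $k(x_1,\dots,x_n)$. Then there exists a finitely generated $\mathbb{Z}$-subalgebra $A \subseteq k$ such that all coefficients of $\phi$ lie in $A$, i.e. $\phi \in A[[x_1,\dots,x_n]]$. -/

import Mathlib

namespace Stmt0Aux

variable {n : ℕ}

/-- deg-lex comparison map. -/
noncomputable def dl (e : Fin n →₀ ℕ) : ℕ ×ₗ Lex (Fin n →₀ ℕ) :=
  toLex (Finsupp.degree e, toLex e)

lemma deg_eq (d : Fin n →₀ ℕ) : Finsupp.degree d = ∑ i : Fin n, d i := by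
  rw [Finsupp.degree]
  exact Finset.sum_subset (Finset.subset_univ _)
    (fun i _ h => Finsupp.notMem_support_iff.mp h)

lemma deg_add (a b : Fin n →₀ ℕ) :
    Finsupp.degree (a + b) = Finsupp.degree a + Finsupp.degree b := by
  simp [deg_eq, Finset.sum_add_distrib]

lemma deg_mono {a b : Fin n →₀ ℕ} (h : a ≤ b) :
    Finsupp.degree a ≤ Finsupp.degree b := by
  rw [deg_eq, deg_eq]
  exact Finset.sum_le_sum fun i _ => Finsupp.le_def.mp h i

lemma dl_injective : Function.Injective (dl (n := n)) := by
  intro a b h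
  have h2 := congrArg (fun x => (ofLex x).2) h
  simpa [dl] using h2

lemma dl_lt_iff {a b : Fin n →₀ ℕ} :
    dl a < dl b ↔ Finsupp.degree a < Finsupp.degree b ∨
      (Finsupp.degree a = Finsupp.degree b ∧ toLex a < toLex b) :=
  Prod.Lex.lt_iff

lemma dl_le_iff {a b : Fin n →₀ ℕ} :
    dl a ≤ dl b ↔ Finsupp.degree a < Finsupp.degree b ∨
      (Finsupp.degree a = Finsupp.degree b ∧ toLex a ≤ toLex b) :=
  Prod.Lex.le_iff

lemma dl_add_lt_add_iff_right {a b d : Fin n →₀ ℕ} :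
    dl (a + d) < dl (b + d) ↔ dl a < dl b := by
  rw [dl_lt_iff, dl_lt_iff]
  simp only [deg_add, toLex_add, add_lt_add_iff_right, Nat.add_right_cancel_iff]

lemma dl_add_lt_add_iff_left {a b d : Fin n →₀ ℕ} :
    dl (d + a) < dl (d + b) ↔ dl a < dl b := by
  rw [add_comm d a, add_comm d b]; exact dl_add_lt_add_iff_right

lemma dl_mono {a b : Fin n →₀ ℕ} (h : a ≤ b) : dl a ≤ dl b := by
  rw [dl_le_iff]
  rcases lt_or_eq_of_le (deg_mono h) with h' | h'
  · exact Or.inl h'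
  · exact Or.inr ⟨h', Finsupp.toLex_monotone h⟩

lemma deg_le_of_dl_le {a b : Fin n →₀ ℕ} (h : dl a ≤ dl b) :
    Finsupp.degree a ≤ Finsupp.degree b := by
  rw [dl_le_iff] at h
  rcases h with h | ⟨h, -⟩
  · exact le_of_lt h
  · exact le_of_eq h

lemma dl_lt_of_deg_lt {a b : Fin n →₀ ℕ} (h : Finsupp.degree a < Finsupp.degree b) :
    dl a < dl b := dl_lt_iff.mpr (Or.inl h)

lemma dl_wf : WellFounded (fun a b : Fin n →₀ ℕ => dl a < dl b) :=
  InvImage.wf dl wellFounded_lt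

variable {k : Type*} [CommRing k]

/-- All coefficients lie in `A`. -/
def MemA (A : Subalgebra ℤ k) (σ : MvPowerSeries (Fin n) k) : Prop :=
  ∀ e, MvPowerSeries.coeff e σ ∈ A

variable {A : Subalgebra ℤ k}

lemma memA_add {σ τ : MvPowerSeries (Fin n) k} (hσ : MemA A σ) (hτ : MemA A τ) :
    MemA A (σ + τ) := fun e => by
  rw [map_add]; exact A.add_mem (hσ e) (hτ e)

lemma memA_one : MemA A (1 : MvPowerSeries (Fin n) k) := fun e => by
  rw [MvPowerSeries.coeff_one]
  split <;> simp [A.one_mem, A.zero_mem]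

lemma memA_mul {σ τ : MvPowerSeries (Fin n) k} (hσ : MemA A σ) (hτ : MemA A τ) :
    MemA A (σ * τ) := fun e => by
  classical
  rw [MvPowerSeries.coeff_mul]
  exact A.sum_mem fun p _ => A.mul_mem (hσ p.1) (hτ p.2)

lemma memA_pow {σ : MvPowerSeries (Fin n) k} (hσ : MemA A σ) : ∀ m, MemA A (σ ^ m)
  | 0 => by rw [pow_zero]; exact memA_one
  | m + 1 => by rw [pow_succ]; exact memA_mul (memA_pow hσ m) hσ

lemma memA_sum {s : Finset ℕ} {f : ℕ → MvPowerSeries (Fin n) k}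
    (h : ∀ i ∈ s, MemA A (f i)) : MemA A (∑ i ∈ s, f i) := fun e => by
  rw [map_sum]
  exact A.sum_mem fun i hi => h i hi e

lemma memA_nsmul {σ : MvPowerSeries (Fin n) k} (hσ : MemA A σ) (m : ℕ) :
    MemA A ((m : MvPowerSeries (Fin n) k) * σ) := fun e => by
  rw [← nsmul_eq_mul, map_nsmul]
  exact nsmul_mem (hσ e) m

lemma memA_coe {q : MvPolynomial (Fin n) k} (h : ∀ m, MvPolynomial.coeff m q ∈ A) :
    MemA A (MvPolynomial.coeToMvPowerSeries.ringHom q) := fun e => by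
  rw [MvPolynomial.coeToMvPowerSeries.ringHom_apply, MvPolynomial.coeff_coe]
  exact h e

/-- Two power series agree on all indices `≺ I`. -/
def Agree (I : Fin n →₀ ℕ) (σ τ : MvPowerSeries (Fin n) k) : Prop :=
  ∀ e, dl e < dl I → MvPowerSeries.coeff e σ = MvPowerSeries.coeff e τ

lemma agree_refl {I} (σ : MvPowerSeries (Fin n) k) : Agree I σ σ := fun _ _ => rfl

lemma agree_mul {I : Fin n →₀ ℕ} {σ₁ σ₂ τ₁ τ₂ : MvPowerSeries (Fin n) k}
    (h1 : Agree I σ₁ σ₂) (h2 : Agree I τ₁ τ₂) : Agree I (σ₁ * τ₁) (σ₂ * τ₂) := by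
  classical
  intro e he
  rw [MvPowerSeries.coeff_mul, MvPowerSeries.coeff_mul]
  refine Finset.sum_congr rfl fun p hp => ?_
  rw [Finset.HasAntidiagonal.mem_antidiagonal] at hp
  have h1' : p.1 ≤ e := hp ▸ le_self_add
  have h2' : p.2 ≤ e := hp ▸ le_add_self
  rw [h1 p.1 (lt_of_le_of_lt (dl_mono h1') he), h2 p.2 (lt_of_le_of_lt (dl_mono h2') he)]

lemma agree_pow {I : Fin n →₀ ℕ} {σ τ : MvPowerSeries (Fin n) k}
    (h : Agree I σ τ) : ∀ m, Agree I (σ ^ m) (τ ^ m)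
  | 0 => by rw [pow_zero, pow_zero]; exact agree_refl _
  | m + 1 => by rw [pow_succ, pow_succ]; exact agree_mul (agree_pow h m) h

lemma agree_sum {I : Fin n →₀ ℕ} {s : Finset ℕ} {f g : ℕ → MvPowerSeries (Fin n) k}
    (h : ∀ i ∈ s, Agree I (f i) (g i)) : Agree I (∑ i ∈ s, f i) (∑ i ∈ s, g i) := fun e he => by
  rw [map_sum, map_sum]
  exact Finset.sum_congr rfl fun i hi => h i hi e he

end Stmt0Aux

open Stmt0Aux


/-- If a formal power series `φ` over a field `k` of characteristic zero is algebraic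
over `k(x_1,…,x_n)` (i.e. annihilated by a nonzero polynomial with coefficients in
`k[x_1,…,x_n]`), then all coefficients of `φ` lie in a finitely generated
`ℤ`-subalgebra of `k`. -/
theorem stmt_0 {k : Type*} [Field k] [CharZero k] {n : ℕ}
    (φ : MvPowerSeries (Fin n) k)
    (F : Polynomial (MvPolynomial (Fin n) k))
    (hF : F ≠ 0)
    (hroot : Polynomial.eval φ (F.map (MvPolynomial.coeToMvPowerSeries.ringHom)) = 0) :
    ∃ A : Subalgebra ℤ k, A.FG ∧ ∀ I : Fin n →₀ ℕ, MvPowerSeries.coeff I φ ∈ A := by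
  classical
  set ρ : MvPolynomial (Fin n) k →+* MvPowerSeries (Fin n) k :=
    MvPolynomial.coeToMvPowerSeries.ringHom with hρdef
  -- Step A: minimal degree annihilating polynomial
  have hex : ∃ d : ℕ, ∃ G : Polynomial (MvPolynomial (Fin n) k),
      G ≠ 0 ∧ Polynomial.eval φ (G.map ρ) = 0 ∧ G.natDegree = d :=
    ⟨F.natDegree, F, hF, hroot, rfl⟩
  obtain ⟨G, hG0, hGroot, hGdeg⟩ := Nat.find_spec hex
  have hmin : ∀ H : Polynomial (MvPolynomial (Fin n) k), H ≠ 0 →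
      Polynomial.eval φ (H.map ρ) = 0 → Nat.find hex ≤ H.natDegree :=
    fun H h1 h2 => Nat.find_min' hex ⟨H, h1, h2, rfl⟩
  -- Step B: G has positive degree
  have hGdeg1 : 0 < G.natDegree := by
    rcases Nat.eq_zero_or_pos G.natDegree with h | h
    · exfalso
      have hC : G = Polynomial.C (G.coeff 0) := Polynomial.eq_C_of_natDegree_eq_zero h
      rw [hC, Polynomial.map_C, Polynomial.eval_C] at hGroot
      have h0 : G.coeff 0 = 0 := by
        rwa [hρdef, MvPolynomial.coeToMvPowerSeries.ringHom_apply,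
          MvPolynomial.coe_eq_zero_iff] at hGroot
      exact hG0 (by rw [hC, h0, map_zero])
    · exact h
  -- Step C: derivative of G is nonzero and does not annihilate φ
  have hG'0 : Polynomial.derivative G ≠ 0 := by
    intro h
    have := Polynomial.natDegree_eq_zero_of_derivative_eq_zero h
    omega
  set Φ' : MvPowerSeries (Fin n) k :=
    Polynomial.eval φ ((Polynomial.derivative G).map ρ) with hΦ'def
  have hΦ'ne : Φ' ≠ 0 := by
    intro h
    have h1 := hmin (Polynomial.derivative G) hG'0 h
    have h2 := Polynomial.natDegree_derivative_lt hGdeg1.ne'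
    omega
  -- Step D: minimal index c of Φ'
  have hsetne : {e : Fin n →₀ ℕ | MvPowerSeries.coeff e Φ' ≠ 0}.Nonempty := by
    by_contra h
    rw [Set.not_nonempty_iff_eq_empty] at h
    apply hΦ'ne
    ext e
    by_contra he
    exact absurd (Set.eq_empty_iff_forall_notMem.mp h e) (by simpa using he)
  set c : Fin n →₀ ℕ := dl_wf.min _ hsetne with hcdef
  have hcne : MvPowerSeries.coeff c Φ' ≠ 0 := dl_wf.min_mem _ hsetne
  have hcmin : ∀ e, dl e < dl c → MvPowerSeries.coeff e Φ' = 0 := by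
    intro e he
    by_contra h
    exact dl_wf.not_lt_min _ h he
  set u : k := MvPowerSeries.coeff c Φ' with hudef
  set D : ℕ := Finsupp.degree c with hDdef
  -- Step E: truncation p and tail ψ
  set p : MvPowerSeries (Fin n) k :=
    (fun e => if Finsupp.degree e ≤ D then MvPowerSeries.coeff e φ else 0 :
      (Fin n →₀ ℕ) → k) with hpdef
  have hpcoeff : ∀ e, MvPowerSeries.coeff e p =
      if Finsupp.degree e ≤ D then MvPowerSeries.coeff e φ else 0 := fun e => rfl
  set ψ : MvPowerSeries (Fin n) k := φ - p with hψdef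
  have hφeq : φ = ψ + p := by rw [hψdef]; ring
  have hψdeg : ∀ e, MvPowerSeries.coeff e ψ ≠ 0 → D < Finsupp.degree e := by
    intro e h
    rw [hψdef, map_sub, hpcoeff] at h
    by_cases hd : Finsupp.degree e ≤ D
    · rw [if_pos hd, sub_self] at h; exact absurd rfl h
    · omega
  have hψne : ∀ e, MvPowerSeries.coeff e ψ ≠ 0 → dl c < dl e := fun e h =>
    dl_lt_of_deg_lt (hψdeg e h)
  -- Step F: the subalgebra A
  set S : Set k :=
    ((⋃ i ∈ Finset.range (G.natDegree + 1),
        (fun m => MvPolynomial.coeff m (G.coeff i)) '' ((G.coeff i).support : Set _)) ∪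
      ((fun e => MvPowerSeries.coeff e φ) '' {e | Finsupp.degree e ≤ D})) ∪ {u⁻¹} with hSdef
  have hSfin : S.Finite := by
    apply Set.Finite.union
    · apply Set.Finite.union
      · exact Set.Finite.biUnion (Finset.range (G.natDegree + 1)).finite_toSet
          fun i _ => Set.Finite.image _ (Finset.finite_toSet _)
      · exact Set.Finite.image _ (Finsupp.finite_of_degree_le D)
    · exact Set.finite_singleton _
  set A : Subalgebra ℤ k := Algebra.adjoin ℤ S with hAdef
  have hGA : ∀ i m, MvPolynomial.coeff m (G.coeff i) ∈ A := by
    intro i m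
    by_cases hi : i ≤ G.natDegree
    · by_cases hm : m ∈ (G.coeff i).support
      · apply Algebra.subset_adjoin
        apply Set.mem_union_left
        apply Set.mem_union_left
        exact Set.mem_biUnion (Finset.mem_range.mpr (Nat.lt_succ_of_le hi)) ⟨m, hm, rfl⟩
      · rw [MvPolynomial.notMem_support_iff.mp hm]; exact A.zero_mem
    · rw [Polynomial.coeff_eq_zero_of_natDegree_lt (by omega), MvPolynomial.coeff_zero]
      exact A.zero_mem
  have hφA : ∀ e, Finsupp.degree e ≤ D → MvPowerSeries.coeff e φ ∈ A := by
    intro e he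
    apply Algebra.subset_adjoin
    exact Set.mem_union_left _ (Set.mem_union_right _ ⟨e, he, rfl⟩)
  have huA : u⁻¹ ∈ A := Algebra.subset_adjoin (Set.mem_union_right _ rfl)
  have hpA : MemA A p := by
    intro e
    rw [hpcoeff]
    split
    · exact hφA e (by assumption)
    · exact A.zero_mem
  -- Step G: Taylor coefficients
  set Ghat : Polynomial (MvPowerSeries (Fin n) k) := G.map ρ with hGhatdef
  set a : ℕ → MvPowerSeries (Fin n) k := fun j => (Polynomial.taylor p Ghat).coeff j with hadef
  have haA : ∀ j, MemA A (a j) := by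
    intro j
    have h1 : a j = (Polynomial.hasseDeriv j Ghat).eval p := Polynomial.taylor_coeff (r := p) Ghat j
    have h2 : (Polynomial.hasseDeriv j Ghat).natDegree < Ghat.natDegree + 1 :=
      Nat.lt_succ_of_le (le_trans (Polynomial.natDegree_hasseDeriv_le Ghat j) (Nat.sub_le _ _))
    rw [h1, Polynomial.eval_eq_sum_range' h2]
    apply memA_sum
    intro i _
    rw [Polynomial.hasseDeriv_coeff, Polynomial.coeff_map, mul_assoc]
    exact memA_nsmul (memA_mul (memA_coe (fun m => hGA (i + j) m)) (memA_pow hpA i)) _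
  -- Step H: the key equation
  set m : ℕ := (Polynomial.taylor p Ghat).natDegree + 1 with hmdef
  set β : MvPowerSeries (Fin n) k := ∑ i ∈ Finset.range m, a (i + 2) * ψ ^ i with hβdef
  have heq : a 0 + a 1 * ψ + ψ ^ 2 * β = 0 := by
    have h0 : (Polynomial.taylor p Ghat).eval ψ = 0 := by
      rw [Polynomial.taylor_eval, ← hφeq]
      exact hGroot
    rw [Polynomial.eval_eq_sum_range' (n := m + 2) (by omega) ψ] at h0
    rw [Finset.sum_range_succ', Finset.sum_range_succ'] at h0
    have h2 : ψ ^ 2 * β = ∑ i ∈ Finset.range m, a (i + 1 + 1) * ψ ^ (i + 1 + 1) := by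
      rw [hβdef, Finset.mul_sum]
      exact Finset.sum_congr rfl fun i _ => by ring
    rw [h2]
    simp only [zero_add, pow_zero, pow_one, mul_one] at h0
    linear_combination h0
  -- Step I: coefficients of (a 1) at indices ≼ c agree with Φ'
  have ha1 : ∀ d, dl d ≤ dl c →
      MvPowerSeries.coeff d (a 1) = MvPowerSeries.coeff d Φ' := by
    intro d hd
    have h1 : a 1 = (Polynomial.derivative Ghat).eval p := Polynomial.taylor_coeff_one p Ghat
    have hdvd : φ - p ∣ Φ' - a 1 := by
      rw [h1, hΦ'def, hGhatdef, ← Polynomial.derivative_map]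
      exact Polynomial.sub_dvd_eval_sub φ p _
    obtain ⟨h, hh⟩ := hdvd
    have hz : MvPowerSeries.coeff d (Φ' - a 1) = 0 := by
      rw [hh, ← hψdef, MvPowerSeries.coeff_mul]
      apply Finset.sum_eq_zero
      intro q hq
      rw [Finset.HasAntidiagonal.mem_antidiagonal] at hq
      by_cases hzz : MvPowerSeries.coeff q.1 ψ = 0
      · rw [hzz, zero_mul]
      · exfalso
        have h2 := hψdeg q.1 hzz
        have h3 : q.1 ≤ d := hq ▸ le_self_add
        have h4 : Finsupp.degree q.1 ≤ D := le_trans (deg_mono h3) (deg_le_of_dl_le hd)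
        omega
    rw [map_sub] at hz
    exact (sub_eq_zero.mp hz).symm
  have hune : u ≠ 0 := hcne
  have ha1c : MvPowerSeries.coeff c (a 1) = u := ha1 c le_rfl
  have ha1lt : ∀ d, dl d < dl c → MvPowerSeries.coeff d (a 1) = 0 := fun d hd =>
    (ha1 d (le_of_lt hd)).trans (hcmin d hd)
  -- Step J: induction
  have key : ∀ I, MvPowerSeries.coeff I ψ ∈ A := by
    intro I
    induction I using WellFounded.induction dl_wf with
    | _ I IH =>
    set ψ' : MvPowerSeries (Fin n) k :=
      (fun e => if dl e < dl I then MvPowerSeries.coeff e ψ else 0 :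
        (Fin n →₀ ℕ) → k) with hψ'def
    have hψ'coeff : ∀ e, MvPowerSeries.coeff e ψ' =
        if dl e < dl I then MvPowerSeries.coeff e ψ else 0 := fun e => rfl
    have hψ'A : MemA A ψ' := fun e => by
      rw [hψ'coeff]
      split
      · exact IH _ ‹_›
      · exact A.zero_mem
    have hagree : Agree I ψ ψ' := fun e he => by rw [hψ'coeff, if_pos he]
    set β' : MvPowerSeries (Fin n) k :=
      ∑ i ∈ Finset.range m, a (i + 2) * ψ' ^ i with hβ'def
    have hβ'A : MemA A β' := memA_sum fun i _ => memA_mul (haA _) (memA_pow hψ'A i)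
    have hβagree : Agree I β β' := agree_sum fun i _ => agree_mul (agree_refl _) (agree_pow hagree i)
    -- Claim 1
    have hclaim1 : MvPowerSeries.coeff (c + I) (a 1 * ψ)
        = u * MvPowerSeries.coeff I ψ + MvPowerSeries.coeff (c + I) (a 1 * ψ') := by
      rw [MvPowerSeries.coeff_mul, MvPowerSeries.coeff_mul]
      have hkey : ∑ q ∈ Finset.HasAntidiagonal.antidiagonal (c + I),
            (MvPowerSeries.coeff q.1 (a 1) * MvPowerSeries.coeff q.2 ψ
             - MvPowerSeries.coeff q.1 (a 1) * MvPowerSeries.coeff q.2 ψ')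
          = u * MvPowerSeries.coeff I ψ := by
        rw [Finset.sum_eq_single_of_mem ((c, I) : (Fin n →₀ ℕ) × (Fin n →₀ ℕ))
          (Finset.HasAntidiagonal.mem_antidiagonal.mpr rfl)]
        · rw [hψ'coeff, if_neg (lt_irrefl _), ha1c]
          ring
        · intro q hq hne
          rw [Finset.HasAntidiagonal.mem_antidiagonal] at hq
          rw [← mul_sub]
          by_cases h1 : dl q.2 < dl I
          · rw [hψ'coeff, if_pos h1, sub_self, mul_zero]
          · rw [hψ'coeff, if_neg h1, sub_zero]
            by_cases h2 : MvPowerSeries.coeff q.2 ψ = 0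
            · rw [h2, mul_zero]
            · have hq2I : q.2 ≠ I := by
                intro h3
                apply hne
                rw [h3] at hq
                exact Prod.ext (add_right_cancel hq) h3
              have hIlt : dl I < dl q.2 :=
                lt_of_le_of_ne (not_lt.mp h1) (fun h => hq2I (dl_injective h.symm))
              have hlt : dl q.1 < dl c := by
                have h3 : dl (q.1 + I) < dl (q.1 + q.2) := dl_add_lt_add_iff_left.mpr hIlt
                rw [hq] at h3
                exact dl_add_lt_add_iff_right.mp h3
              rw [ha1lt _ hlt, zero_mul]
      rw [Finset.sum_sub_distrib] at hkey
      linear_combination hkey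
    -- Claim 2
    have hclaim2 : MvPowerSeries.coeff (c + I) (ψ ^ 2 * β)
        = MvPowerSeries.coeff (c + I) (ψ' ^ 2 * β') := by
      have hsq : ψ ^ 2 * β = ψ * (ψ * β) := by ring
      have hsq' : ψ' ^ 2 * β' = ψ' * (ψ' * β') := by ring
      rw [hsq, hsq', MvPowerSeries.coeff_mul, MvPowerSeries.coeff_mul]
      apply Finset.sum_congr rfl
      intro q hq
      rw [Finset.HasAntidiagonal.mem_antidiagonal] at hq
      by_cases h1 : MvPowerSeries.coeff q.1 ψ = 0
      · have h1' : MvPowerSeries.coeff q.1 ψ' = 0 := by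
          rw [hψ'coeff]
          split
          · exact h1
          · rfl
        rw [h1, h1', zero_mul, zero_mul]
      · have hcq1 : dl c < dl q.1 := hψne q.1 h1
        have hq2I : dl q.2 < dl I := by
          have h3 : dl (c + q.2) < dl (q.1 + q.2) := dl_add_lt_add_iff_right.mpr hcq1
          rw [hq] at h3
          exact dl_add_lt_add_iff_left.mp h3
        have hinner : MvPowerSeries.coeff q.2 (ψ * β)
            = MvPowerSeries.coeff q.2 (ψ' * β') := agree_mul hagree hβagree q.2 hq2I
        by_cases h4 : MvPowerSeries.coeff q.2 (ψ * β) = 0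
        · rw [← hinner, h4, mul_zero, mul_zero]
        · have hwit : ∃ r ∈ Finset.HasAntidiagonal.antidiagonal q.2,
              MvPowerSeries.coeff r.1 ψ * MvPowerSeries.coeff r.2 β ≠ 0 := by
            by_contra h5
            push_neg at h5
            exact h4 (by rw [MvPowerSeries.coeff_mul]; exact Finset.sum_eq_zero h5)
          obtain ⟨r, hr, hrne⟩ := hwit
          rw [Finset.HasAntidiagonal.mem_antidiagonal] at hr
          have hr1 : MvPowerSeries.coeff r.1 ψ ≠ 0 := fun h => hrne (by rw [h, zero_mul])
          have hcr1 : dl c < dl r.1 := hψne r.1 hr1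
          have hq1I : dl q.1 < dl I := by
            have h6 : dl (q.1 + c) < dl (q.1 + r.1) := dl_add_lt_add_iff_left.mpr hcr1
            have h7 : q.1 + r.1 ≤ c + I := by
              calc q.1 + r.1 ≤ q.1 + q.2 := add_le_add_right (hr ▸ le_self_add) q.1
              _ = c + I := hq
            have h8 : dl (q.1 + c) < dl (c + I) := lt_of_lt_of_le h6 (dl_mono h7)
            rw [add_comm c I] at h8
            exact dl_add_lt_add_iff_right.mp h8
          rw [← hinner, hψ'coeff, if_pos hq1I]
    -- Assemble
    have h9 : MvPowerSeries.coeff (c + I) (a 0 + a 1 * ψ + ψ ^ 2 * β) = 0 := by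
      rw [heq, map_zero]
    rw [map_add, map_add, hclaim1, hclaim2] at h9
    have hE'A : MvPowerSeries.coeff (c + I) (a 0)
        + MvPowerSeries.coeff (c + I) (a 1 * ψ')
        + MvPowerSeries.coeff (c + I) (ψ' ^ 2 * β') ∈ A :=
      A.add_mem (A.add_mem (haA 0 _) (memA_mul (haA 1) hψ'A _))
        (memA_mul (memA_pow hψ'A 2) hβ'A _)
    have hval : MvPowerSeries.coeff I ψ
        = u⁻¹ * (-(MvPowerSeries.coeff (c + I) (a 0)
          + MvPowerSeries.coeff (c + I) (a 1 * ψ')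
          + MvPowerSeries.coeff (c + I) (ψ' ^ 2 * β'))) := by
      rw [eq_comm, inv_mul_eq_iff_eq_mul₀ hune]
      linear_combination -h9
    rw [hval]
    exact A.mul_mem huA (A.neg_mem hE'A)
  refine ⟨A, Subalgebra.fg_def.mpr ⟨S, hSfin, rfl⟩, ?_⟩
  intro I
  rw [hφeq, map_add]
  exact A.add_mem (key I) (hpA I)
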